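/- Let (a_k)_{k≥0} be complex numbers with ∑_{k≥0} |a_k|² < ∞, and set ĥ(t) := ∑_{k=0}^{∞} a_k χ_{[k,k+1)}(t) and ĥ_n(t) := ∑_{k=0}^{2ⁿ−1} a_k χ_{[k,k+1)}(t). Define V₀(g) := inf_{t̃ ∈ ℝ₊} ∫_{ℝ₊} (t ⊕ t̃)² |g(t)|² dt and assume V₀(ĥ) < ∞. Then the sequence (V₀(ĥ_n))_{n∈ℕ} is nondecreasing and lim_{n→∞} V₀(ĥ_n) = V₀(ĥ). -/

import Mathlib

open MeasureTheory Set Filter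
open scoped ENNReal NNReal

noncomputable section

/-- The `j`-th binary digit of `x ∈ ℝ₊` in the expansion `x = ∑ x_j 2^{-j-1}`
    terminating in 0's for dyadic rationals. -/
def dDigit (x : ℝ) (j : ℤ) : ℕ := (⌊x * 2 ^ (j + 1)⌋).toNat % 2

/-- The dyadic sum `x ⊕ y`. -/
def dSum (x y : ℝ) : ℝ := ∑' j : ℤ, |(dDigit x j : ℝ) - (dDigit y j : ℝ)| * 2 ^ (-j - 1)

/-- The Walsh character `w(t,x) = (-1)^{∑ t_j x_{-j-1}}`. -/
def walsh (t x : ℝ) : ℝ := (-1 : ℝ) ^ (∑' j : ℤ, dDigit t j * dDigit x (-j - 1))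

/-- Lebesgue measure on `ℝ₊ = [0,∞)`. -/
def μplus : Measure ℝ := volume.restrict (Set.Ici 0)

/-- The Walsh–Fourier transform, as a pointwise integral (defined for `f ∈ L¹(ℝ₊)`). -/
def WFT (f : ℝ → ℂ) (t : ℝ) : ℂ := ∫ x, f x * (walsh t x : ℂ) ∂μplus

/-- numerator of `V(f)`:  `inf_{x̃ ∈ ℝ₊} ∫_{ℝ₊} (x ⊕ x̃)² |f(x)|² dx`. -/
def Vnum (f : ℝ → ℂ) : ℝ≥0∞ :=
  ⨅ xt ∈ Set.Ici (0:ℝ), ∫⁻ x, ENNReal.ofReal ((dSum x xt) ^ 2) * (‖f x‖₊ : ℝ≥0∞) ^ 2 ∂μplus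

/-- `V(f) = ‖f‖₂⁻² · inf_{x̃} ∫ (x ⊕ x̃)² |f(x)|² dx`. -/
def Vfun (f : ℝ → ℂ) : ℝ≥0∞ := Vnum f / ∫⁻ x, (‖f x‖₊ : ℝ≥0∞) ^ 2 ∂μplus

/-- `fhat` is the Walsh–Fourier transform of `f ∈ L²(ℝ₊)` in the sense of the
    unitary `L²` extension: the transforms of the integrable truncations
    `f·χ_{[0,n)}` converge to `fhat` in `L²(ℝ₊)`. -/
def IsL2WFT (f fhat : ℝ → ℂ) : Prop :=
  Tendsto (fun n : ℕ =>
      eLpNorm (fun t => WFT (Set.indicator (Set.Ico (0:ℝ) (n:ℝ)) f) t - fhat t) 2 μplus)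
    atTop (nhds 0)

lemma dDigit_le_one (x : ℝ) (j : ℤ) : dDigit x j ≤ 1 :=
  Nat.lt_succ_iff.mp (Nat.mod_lt _ two_pos)

lemma floor_half (x : ℝ) : ⌊x / 2⌋ = ⌊x⌋ / 2 := by
  rw [Int.floor_eq_iff]
  constructor
  · have h1 : (2 : ℤ) * (⌊x⌋ / 2) ≤ ⌊x⌋ := by omega
    have h2 : (2:ℝ) * ((⌊x⌋ / 2 : ℤ) : ℝ) ≤ (⌊x⌋ : ℝ) := by exact_mod_cast h1
    have := Int.floor_le x
    linarith
  · have h1 : ⌊x⌋ ≤ (2 : ℤ) * (⌊x⌋ / 2) + 1 := by omega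
    have h2 : ((⌊x⌋ : ℝ)) ≤ 2 * ((⌊x⌋ / 2 : ℤ) : ℝ) + 1 := by exact_mod_cast h1
    have := Int.lt_floor_add_one x
    linarith

/-- step: digit as difference of scaled floors -/
lemma dDigit_step {x : ℝ} (hx : 0 ≤ x) (j : ℤ) :
    (dDigit x j : ℝ) * 2 ^ (-j - 1) =
      (⌊x * 2 ^ (j + 1)⌋ : ℝ) * 2 ^ (-(j + 1)) - (⌊x * 2 ^ j⌋ : ℝ) * 2 ^ (-j) := by
  have hm : (0 : ℤ) ≤ ⌊x * 2 ^ (j + 1)⌋ :=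
    Int.floor_nonneg.mpr (by positivity)
  have hdiv : ⌊x * 2 ^ (j + 1)⌋ / 2 = ⌊x * 2 ^ j⌋ := by
    rw [← floor_half]
    congr 1
    rw [zpow_add₀ (two_ne_zero)]
    ring
  have hd : (dDigit x j : ℤ) = ⌊x * 2 ^ (j + 1)⌋ - 2 * ⌊x * 2 ^ j⌋ := by
    unfold dDigit
    omega
  have hd' : (dDigit x j : ℝ) = (⌊x * 2 ^ (j + 1)⌋ : ℝ) - 2 * (⌊x * 2 ^ j⌋ : ℝ) := by
    exact_mod_cast congrArg (Int.cast : ℤ → ℝ) hd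
  rw [hd']
  have h2 : (2 : ℝ) ^ (-(j+1)) * 2 = 2 ^ (-j) := by
    rw [← zpow_add_one₀ (two_ne_zero : (2:ℝ) ≠ 0)]
    ring_nf
  have h3 : (-j - 1) = -(j+1) := by ring
  rw [h3, ← h2]
  ring

lemma dDigit_zero_of_small {x : ℝ} (hx : 0 ≤ x) {j : ℤ} (h : x * 2 ^ (j + 1) < 1) :
    dDigit x j = 0 := by
  unfold dDigit
  have : ⌊x * 2 ^ (j + 1)⌋ = 0 := Int.floor_eq_zero_iff.mpr ⟨by positivity, h⟩
  simp [this]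

lemma dDigit_zero_of_lt {x : ℝ} {n : ℕ} (hx : 0 ≤ x) (hxn : x < 2 ^ n) {j : ℤ}
    (hj : j < -(n : ℤ)) : dDigit x j = 0 := by
  apply dDigit_zero_of_small hx
  have h1 : (2 : ℝ) ^ (j + 1) ≤ 2 ^ (-(n : ℤ)) :=
    zpow_le_zpow_right₀ one_le_two (by omega)
  have h2 : (0 : ℝ) < 2 ^ (j + 1) := by positivity
  have h3 : (2 : ℝ) ^ (-(n : ℤ)) = ((2 : ℝ) ^ n)⁻¹ := by
    rw [zpow_neg, zpow_natCast]
  calc x * 2 ^ (j + 1) ≤ x * 2 ^ (-(n : ℤ)) := by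
        apply mul_le_mul_of_nonneg_left h1 hx
    _ < 2 ^ n * 2 ^ (-(n:ℤ)) := by
        apply mul_lt_mul_of_pos_right hxn (by positivity)
    _ = 1 := by rw [h3]; field_simp

/-- the Icc-sum telescopes -/
lemma sum_Icc_step {x : ℝ} (hx : 0 ≤ x) (M N : ℕ) :
    ∑ j ∈ Finset.Icc (-(M:ℤ)) (N:ℤ), (dDigit x j : ℝ) * 2 ^ (-j - 1) =
      (⌊x * 2 ^ ((N:ℤ) + 1)⌋ : ℝ) * 2 ^ (-((N:ℤ) + 1)) -
        (⌊x * 2 ^ (-(M:ℤ))⌋ : ℝ) * 2 ^ (M:ℤ) := by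
  set b : ℤ → ℝ := fun j => (⌊x * 2 ^ j⌋ : ℝ) * 2 ^ (-j) with hb
  have hstep : ∀ j : ℤ, (dDigit x j : ℝ) * 2 ^ (-j - 1) = b (j + 1) - b j := by
    intro j; exact dDigit_step hx j
  have hmap : Finset.Icc (-(M:ℤ)) (N:ℤ) =
      (Finset.range (M + N + 1)).map ⟨fun i : ℕ => -(M:ℤ) + i,
        (add_right_injective (-(M:ℤ))).comp Nat.cast_injective⟩ := by
    ext j
    simp only [Finset.mem_Icc, Finset.mem_map, Finset.mem_range, Function.Embedding.coeFn_mk]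
    constructor
    · rintro ⟨h1, h2⟩
      refine ⟨(j + M).toNat, by omega, by omega⟩
    · rintro ⟨i, hi, rfl⟩; omega
  rw [hmap, Finset.sum_map]
  simp only [Function.Embedding.coeFn_mk]
  have : ∀ i ∈ Finset.range (M + N + 1),
      (dDigit x (-(M:ℤ) + i) : ℝ) * 2 ^ (-(-(M:ℤ) + i) - 1) =
        (fun i : ℕ => b (-(M:ℤ) + i)) (i + 1) - (fun i : ℕ => b (-(M:ℤ) + i)) i := by
    intro i _
    simp only
    rw [hstep (-(M:ℤ) + i)]
    congr 2
    push_cast; ring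
  rw [Finset.sum_congr rfl this, Finset.sum_range_sub (fun i : ℕ => b (-(M:ℤ) + i))]
  have e1 : -(M:ℤ) + (M + N + 1 : ℕ) = (N:ℤ) + 1 := by push_cast; ring
  have e2 : -(M:ℤ) + (0 : ℕ) = -(M:ℤ) := by push_cast; ring
  rw [e1, e2]
  simp only [b, neg_neg]

lemma hasSum_dDigit {x : ℝ} (hx : 0 ≤ x) :
    HasSum (fun j : ℤ => (dDigit x j : ℝ) * 2 ^ (-j - 1)) x := by
  have hnn : ∀ j : ℤ, 0 ≤ (dDigit x j : ℝ) * 2 ^ (-j - 1) := by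
    intro j; positivity
  apply hasSum_of_isLUB_of_nonneg x hnn
  constructor
  · rintro y ⟨s, rfl⟩
    set M : ℕ := s.sup fun j => j.natAbs with hM
    have hsub : s ⊆ Finset.Icc (-(M:ℤ)) (M:ℤ) := by
      intro j hj
      have : j.natAbs ≤ M := Finset.le_sup (f := fun j : ℤ => j.natAbs) hj
      simp only [Finset.mem_Icc]; omega
    calc ∑ j ∈ s, (dDigit x j : ℝ) * 2 ^ (-j - 1)
        ≤ ∑ j ∈ Finset.Icc (-(M:ℤ)) (M:ℤ), (dDigit x j : ℝ) * 2 ^ (-j - 1) :=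
          Finset.sum_le_sum_of_subset_of_nonneg hsub (fun j _ _ => hnn j)
      _ = (⌊x * 2 ^ ((M:ℤ) + 1)⌋ : ℝ) * 2 ^ (-((M:ℤ) + 1)) -
            (⌊x * 2 ^ (-(M:ℤ))⌋ : ℝ) * 2 ^ (M:ℤ) := sum_Icc_step hx M M
      _ ≤ x := by
          have h1 : (⌊x * 2 ^ ((M:ℤ) + 1)⌋ : ℝ) ≤ x * 2 ^ ((M:ℤ) + 1) := Int.floor_le _
          have h2 : (0:ℝ) ≤ (⌊x * 2 ^ (-(M:ℤ))⌋ : ℝ) := by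
            exact_mod_cast Int.floor_nonneg.mpr (by positivity)
          have h3 : (0:ℝ) < 2 ^ (-((M:ℤ)+1)) := by positivity
          have h4 : (0:ℝ) < 2 ^ (M:ℤ) := by positivity
          have h5 : (2:ℝ) ^ ((M:ℤ)+1) * 2 ^ (-((M:ℤ)+1)) = 1 := by
            rw [← zpow_add₀ (two_ne_zero : (2:ℝ) ≠ 0), add_neg_cancel, zpow_zero]
          nlinarith [mul_le_mul_of_nonneg_right h1 h3.le]
  · rintro y hy
    by_contra hlt
    push_neg at hlt
    obtain ⟨M, hM⟩ := pow_unbounded_of_one_lt x (one_lt_two (α := ℝ))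
    obtain ⟨N, hN⟩ := exists_pow_lt_of_lt_one (sub_pos.mpr hlt) (by norm_num : (1:ℝ)/2 < 1)
    have hb0 : ⌊x * 2 ^ (-(M:ℤ))⌋ = 0 := by
      apply Int.floor_eq_zero_iff.mpr
      constructor
      · positivity
      · have : (2:ℝ) ^ (-(M:ℤ)) = ((2:ℝ) ^ M)⁻¹ := by rw [zpow_neg, zpow_natCast]
        rw [this]
        rw [mul_inv_lt_iff₀ (by positivity), one_mul]
        exact hM
    have key : y < ∑ j ∈ Finset.Icc (-(M:ℤ)) (N:ℤ), (dDigit x j : ℝ) * 2 ^ (-j - 1) := by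
      rw [sum_Icc_step hx M N, hb0]
      simp only [Int.cast_zero, zero_mul, sub_zero]
      have h1 : x * 2 ^ ((N:ℤ) + 1) - 1 < (⌊x * 2 ^ ((N:ℤ) + 1)⌋ : ℝ) :=
        Int.sub_one_lt_floor _
      have h3 : (0:ℝ) < 2 ^ (-((N:ℤ)+1)) := by positivity
      have h5 : (2:ℝ) ^ ((N:ℤ)+1) * 2 ^ (-((N:ℤ)+1)) = 1 := by
        rw [← zpow_add₀ (two_ne_zero : (2:ℝ) ≠ 0), add_neg_cancel, zpow_zero]
      have h6 : (2:ℝ) ^ (-((N:ℤ)+1)) ≤ (1/2) ^ N := by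
        rw [one_div, inv_pow, ← zpow_natCast (2:ℝ) N, ← zpow_neg]
        apply zpow_le_zpow_right₀ one_le_two
        omega
      have h7 : x - 2 ^ (-((N:ℤ)+1)) < (⌊x * 2 ^ ((N:ℤ) + 1)⌋ : ℝ) * 2 ^ (-((N:ℤ)+1)) := by
        nlinarith [mul_lt_mul_of_pos_right h1 h3]
      nlinarith
    have := hy ⟨Finset.Icc (-(M:ℤ)) (N:ℤ), rfl⟩
    linarith

lemma abs_dDigit_sub_le_one (x y : ℝ) (j : ℤ) :
    |(dDigit x j : ℝ) - (dDigit y j : ℝ)| ≤ 1 := by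
  have h1 := dDigit_le_one x j
  have h2 := dDigit_le_one y j
  have h1' : (dDigit x j : ℝ) ≤ 1 := by exact_mod_cast h1
  have h2' : (dDigit y j : ℝ) ≤ 1 := by exact_mod_cast h2
  have h3 : (0:ℝ) ≤ (dDigit x j : ℝ) := by positivity
  have h4 : (0:ℝ) ≤ (dDigit y j : ℝ) := by positivity
  rw [abs_le]; constructor <;> linarith

lemma summable_dDigit_pair {x y : ℝ} (hx : 0 ≤ x) (hy : 0 ≤ y) :
    Summable (fun j : ℤ => |(dDigit x j : ℝ) - (dDigit y j : ℝ)| * 2 ^ (-j - 1)) := by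
  obtain ⟨n, hn⟩ := pow_unbounded_of_one_lt (max x y) (one_lt_two (α := ℝ))
  have hxn : x < 2 ^ n := lt_of_le_of_lt (le_max_left _ _) hn
  have hyn : y < 2 ^ n := lt_of_le_of_lt (le_max_right _ _) hn
  apply Summable.of_nat_of_neg
  · have hgeom : Summable (fun k : ℕ => (1/2:ℝ)^k) :=
      summable_geometric_of_lt_one (by norm_num) (by norm_num)
    refine Summable.of_nonneg_of_le (fun k => by positivity) (fun k => ?_) hgeom
    have hd := abs_dDigit_sub_le_one x y (k:ℤ)
    have hw : (2:ℝ) ^ (-(k:ℤ) - 1) ≤ (1/2) ^ k := by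
      rw [one_div, inv_pow, ← zpow_natCast (2:ℝ) k, ← zpow_neg]
      exact zpow_le_zpow_right₀ one_le_two (by omega)
    have hw0 : (0:ℝ) < 2 ^ (-(k:ℤ) - 1) := by positivity
    calc |(dDigit x (k:ℤ) : ℝ) - (dDigit y (k:ℤ) : ℝ)| * 2 ^ (-(k:ℤ) - 1)
        ≤ 1 * 2 ^ (-(k:ℤ) - 1) := mul_le_mul_of_nonneg_right hd hw0.le
      _ ≤ (1/2) ^ k := by rw [one_mul]; exact hw
  · apply summable_of_ne_finset_zero (s := Finset.range (n+1))
    intro k hk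
    have hk' : n + 1 ≤ k := by simpa using hk
    have hj : -(k:ℤ) < -(n:ℤ) := by omega
    rw [dDigit_zero_of_lt hx hxn hj, dDigit_zero_of_lt hy hyn hj]
    simp

lemma dSum_le_add {x y : ℝ} (hx : 0 ≤ x) (hy : 0 ≤ y) : dSum x y ≤ x + y := by
  have hs := summable_dDigit_pair hx hy
  have hadd : HasSum (fun j : ℤ => ((dDigit x j : ℝ) + dDigit y j) * 2 ^ (-j-1)) (x+y) := by
    simpa [add_mul] using (hasSum_dDigit hx).add (hasSum_dDigit hy)
  unfold dSum
  rw [← hadd.tsum_eq]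
  apply Summable.tsum_le_tsum _ hs hadd.summable
  intro j
  apply mul_le_mul_of_nonneg_right _ (by positivity)
  calc |(dDigit x j : ℝ) - dDigit y j| ≤ |(dDigit x j : ℝ)| + |(dDigit y j : ℝ)| := abs_sub _ _
    _ = (dDigit x j : ℝ) + dDigit y j := by
        rw [abs_of_nonneg (by positivity), abs_of_nonneg (by positivity)]

lemma sub_le_dSum {x y : ℝ} (hx : 0 ≤ x) (hy : 0 ≤ y) : x - y ≤ dSum x y := by
  have hs := summable_dDigit_pair hx hy
  have hsub : HasSum (fun j : ℤ => ((dDigit x j : ℝ) - dDigit y j) * 2 ^ (-j-1)) (x-y) := by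
    simpa [sub_mul] using (hasSum_dDigit hx).sub (hasSum_dDigit hy)
  unfold dSum
  rw [← hsub.tsum_eq]
  apply Summable.tsum_le_tsum _ hsub.summable hs
  intro j
  exact mul_le_mul_of_nonneg_right (le_abs_self _) (by positivity)

lemma dSum_nonneg (x y : ℝ) : 0 ≤ dSum x y :=
  tsum_nonneg fun j => by positivity

lemma fract_nonneg' (tt : ℝ) (n : ℕ) : 0 ≤ tt - 2 ^ n * ⌊tt / 2 ^ n⌋ := by
  have := Int.sub_floor_div_mul_nonneg tt (b := (2:ℝ)^n) (by positivity)
  linarith [this]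

lemma fract_lt' (tt : ℝ) (n : ℕ) : tt - 2 ^ n * ⌊tt / 2 ^ n⌋ < 2 ^ n := by
  have := Int.sub_floor_div_mul_lt tt (b := (2:ℝ)^n) (by positivity)
  linarith [this]

lemma dDigit_fract {tt : ℝ} (htt : 0 ≤ tt) (n : ℕ) {j : ℤ} (hj : -(n:ℤ) ≤ j) :
    dDigit (tt - 2 ^ n * ⌊tt / 2 ^ n⌋) j = dDigit tt j := by
  set q : ℤ := ⌊tt / 2 ^ n⌋ with hq
  set e : ℕ := ((n:ℤ) + j + 1).toNat with he
  have he1 : 1 ≤ e := by omega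
  have hee : ((e : ℤ) : ℤ) = (n:ℤ) + j + 1 := by omega
  have hpow : (2:ℝ) ^ n * 2 ^ (j+1) = ((2 ^ e : ℤ) : ℝ) := by
    push_cast
    rw [← zpow_natCast (2:ℝ) n, ← zpow_add₀ (two_ne_zero : (2:ℝ) ≠ 0),
      ← zpow_natCast (2:ℝ) e]
    congr 1
    omega
  have hfloor : ⌊(tt - 2 ^ n * q) * 2 ^ (j+1)⌋ = ⌊tt * 2 ^ (j+1)⌋ - q * 2 ^ e := by
    have : (tt - 2 ^ n * q) * 2 ^ (j+1) = tt * 2 ^ (j+1) - ((q * 2 ^ e : ℤ) : ℝ) := by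
      push_cast [← hpow]
      ring
    rw [this, Int.floor_sub_intCast]
  have hv0 : (0:ℤ) ≤ ⌊(tt - 2 ^ n * q) * 2 ^ (j+1)⌋ :=
    Int.floor_nonneg.mpr (mul_nonneg (fract_nonneg' tt n) (by positivity))
  obtain ⟨u, hu⟩ : (2:ℤ) ∣ q * 2 ^ e := Dvd.dvd.mul_left (dvd_pow_self 2 (by omega)) q
  have hA0 : (0:ℤ) ≤ ⌊tt * 2 ^ (j+1)⌋ := Int.floor_nonneg.mpr (by positivity)
  rw [hfloor, hu] at hv0
  unfold dDigit
  rw [hfloor, hu]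
  omega

lemma dSum_fract_le {t tt : ℝ} (n : ℕ) (ht0 : 0 ≤ t) (ht1 : t < 2 ^ n) (htt : 0 ≤ tt) :
    dSum t (tt - 2 ^ n * ⌊tt / 2 ^ n⌋) ≤ dSum t tt := by
  set v := tt - 2 ^ n * ⌊tt / 2 ^ n⌋ with hv
  have hv0 : 0 ≤ v := fract_nonneg' tt n
  have hv1 : v < 2 ^ n := fract_lt' tt n
  apply Summable.tsum_le_tsum _ (summable_dDigit_pair ht0 hv0) (summable_dDigit_pair ht0 htt)
  intro j
  rcases le_or_gt (-(n:ℤ)) j with hj | hj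
  · rw [hv, dDigit_fract htt n hj]
  · rw [dDigit_zero_of_lt ht0 ht1 hj, dDigit_zero_of_lt hv0 hv1 hj]
    have := dDigit_le_one tt j
    simp only [Nat.cast_zero, sub_zero, abs_zero, zero_mul, sub_self]
    positivity


section hsum
variable (a : ℕ → ℂ)

def hsum (t : ℝ) : ℂ :=
  ∑' k : ℕ, a k * Set.indicator (Set.Ico (k : ℝ) ((k : ℝ) + 1)) (fun _ => (1:ℂ)) t

lemma mem_Ico_floor {t : ℝ} (ht : 0 ≤ t) :
    t ∈ Set.Ico ((⌊t⌋.toNat : ℝ)) ((⌊t⌋.toNat : ℝ) + 1) := by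
  have h0 : (0:ℤ) ≤ ⌊t⌋ := Int.floor_nonneg.mpr ht
  have hc : ((⌊t⌋.toNat : ℝ)) = ((⌊t⌋ : ℤ) : ℝ) := by exact_mod_cast Int.toNat_of_nonneg h0
  constructor
  · rw [hc]; exact Int.floor_le t
  · rw [hc]; exact Int.lt_floor_add_one t

lemma not_mem_Ico_of_ne {t : ℝ} (ht : 0 ≤ t) {k : ℕ} (hk : k ≠ ⌊t⌋.toNat) :
    t ∉ Set.Ico (k : ℝ) ((k : ℝ) + 1) := by
  rintro ⟨h1, h2⟩
  have h0 : (0:ℤ) ≤ ⌊t⌋ := Int.floor_nonneg.mpr ht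
  have : ⌊t⌋ = (k : ℤ) := Int.floor_eq_iff.mpr ⟨by exact_mod_cast h1, by exact_mod_cast h2⟩
  omega

lemma hsum_eq {t : ℝ} (ht : 0 ≤ t) : hsum a t = a ⌊t⌋.toNat := by
  unfold hsum
  rw [tsum_eq_single ⌊t⌋.toNat]
  · rw [Set.indicator_of_mem (mem_Ico_floor ht), mul_one]
  · intro k hk
    rw [Set.indicator_of_notMem (not_mem_Ico_of_ne ht hk), mul_zero]

lemma partial_eq (N : ℕ) (t : ℝ) :
    (∑ k ∈ Finset.range N,
        a k * Set.indicator (Set.Ico (k : ℝ) ((k : ℝ) + 1)) (fun _ => (1:ℂ)) t)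
      = Set.indicator (Set.Ico (0:ℝ) (N:ℝ)) (hsum a) t := by
  by_cases hmem : t ∈ Set.Ico (0:ℝ) (N:ℝ)
  · rw [Set.indicator_of_mem hmem, hsum_eq a hmem.1]
    have hk0 : ⌊t⌋.toNat < N := by
      have h1 : ((⌊t⌋.toNat : ℝ)) ≤ t := (mem_Ico_floor hmem.1).1
      have h2 : t < (N : ℝ) := hmem.2
      exact_mod_cast lt_of_le_of_lt h1 h2
    rw [Finset.sum_eq_single ⌊t⌋.toNat]
    · rw [Set.indicator_of_mem (mem_Ico_floor hmem.1), mul_one]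
    · intro k _ hk
      rw [Set.indicator_of_notMem (not_mem_Ico_of_ne hmem.1 hk), mul_zero]
    · intro hko
      exact absurd (Finset.mem_range.mpr hk0) hko
  · rw [Set.indicator_of_notMem hmem]
    apply Finset.sum_eq_zero
    intro k hk
    have hkN : k < N := Finset.mem_range.mp hk
    have : t ∉ Set.Ico (k : ℝ) ((k : ℝ) + 1) := by
      rintro ⟨h1, h2⟩
      apply hmem
      constructor
      · exact le_trans (by positivity) h1
      · calc t < (k:ℝ) + 1 := h2
          _ ≤ (N : ℝ) := by exact_mod_cast hkN
    rw [Set.indicator_of_notMem this, mul_zero]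

end hsum

section main
variable (a : ℕ → ℂ)

/-- the basic integrand -/
def Gfun (tt t : ℝ) : ℝ≥0∞ :=
  ENNReal.ofReal ((dSum t tt) ^ 2) * (‖hsum a t‖₊ : ℝ≥0∞) ^ 2

/-- full quadratic functional -/
def Ffun (tt : ℝ) : ℝ≥0∞ := ∫⁻ t in Set.Ici (0:ℝ), Gfun a tt t

/-- truncated functional -/
def Afun (n : ℕ) (tt : ℝ) : ℝ≥0∞ := ∫⁻ t in Set.Ico (0:ℝ) ((2:ℝ)^n), Gfun a tt t

/-- tail functional -/
def Bfun (n : ℕ) (tt : ℝ) : ℝ≥0∞ := ∫⁻ t in Set.Ici ((2:ℝ)^n), Gfun a tt t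

lemma integrand_partial (tt : ℝ) (n : ℕ) (t : ℝ) :
    ENNReal.ofReal ((dSum t tt) ^ 2) *
        (‖∑ k ∈ Finset.range (2 ^ n),
            a k * Set.indicator (Set.Ico (k : ℝ) ((k : ℝ) + 1)) (fun _ => (1:ℂ)) t‖₊ : ℝ≥0∞) ^ 2
      = Set.indicator (Set.Ico (0:ℝ) (((2^n : ℕ)):ℝ)) (Gfun a tt) t := by
  rw [partial_eq]
  by_cases hmem : t ∈ Set.Ico (0:ℝ) (((2^n:ℕ)):ℝ)
  · rw [Set.indicator_of_mem hmem, Set.indicator_of_mem hmem]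
    rfl
  · rw [Set.indicator_of_notMem hmem, Set.indicator_of_notMem hmem]
    simp

lemma lint_partial (tt : ℝ) (n : ℕ) :
    (∫⁻ t, ENNReal.ofReal ((dSum t tt) ^ 2) *
        (‖∑ k ∈ Finset.range (2 ^ n),
            a k * Set.indicator (Set.Ico (k : ℝ) ((k : ℝ) + 1)) (fun _ => (1:ℂ)) t‖₊ : ℝ≥0∞) ^ 2
        ∂μplus) = Afun a n tt := by
  have hcast : (((2^n : ℕ)):ℝ) = (2:ℝ)^n := by push_cast; ring
  calc (∫⁻ t, ENNReal.ofReal ((dSum t tt) ^ 2) *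
        (‖∑ k ∈ Finset.range (2 ^ n),
            a k * Set.indicator (Set.Ico (k : ℝ) ((k : ℝ) + 1)) (fun _ => (1:ℂ)) t‖₊ : ℝ≥0∞) ^ 2
        ∂μplus)
      = ∫⁻ t, Set.indicator (Set.Ico (0:ℝ) ((2:ℝ)^n)) (Gfun a tt) t ∂μplus := by
        apply lintegral_congr
        intro t
        rw [integrand_partial, hcast]
    _ = ∫⁻ t in Set.Ico (0:ℝ) ((2:ℝ)^n), Gfun a tt t ∂μplus :=
        lintegral_indicator measurableSet_Ico _
    _ = Afun a n tt := by
        unfold Afun μplus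
        rw [Measure.restrict_restrict measurableSet_Ico,
          Set.inter_eq_self_of_subset_left Set.Ico_subset_Ici_self]

lemma lint_full (tt : ℝ) :
    (∫⁻ t, ENNReal.ofReal ((dSum t tt) ^ 2) *
        (‖∑' k : ℕ, a k * Set.indicator (Set.Ico (k : ℝ) ((k : ℝ) + 1)) (fun _ => (1:ℂ)) t‖₊ : ℝ≥0∞) ^ 2
        ∂μplus) = Ffun a tt := rfl

lemma Ffun_split (n : ℕ) (tt : ℝ) : Ffun a tt = Afun a n tt + Bfun a n tt := by
  have hd : Disjoint (Set.Ico (0:ℝ) ((2:ℝ)^n)) (Set.Ici ((2:ℝ)^n)) := by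
    apply Set.disjoint_left.mpr
    rintro x ⟨_, hx2⟩ hx3
    exact absurd hx3 (not_le.mpr hx2)
  have hu : Set.Ico (0:ℝ) ((2:ℝ)^n) ∪ Set.Ici ((2:ℝ)^n) = Set.Ici (0:ℝ) :=
    Set.Ico_union_Ici_eq_Ici (by positivity)
  unfold Ffun Afun Bfun
  rw [← hu, lintegral_union measurableSet_Ici hd]

lemma Bfun_tendsto {tt₀ : ℝ} (hfin : Ffun a tt₀ ≠ ∞) :
    Tendsto (fun n => Bfun a n tt₀) atTop (nhds 0) := by
  set c : ℕ → ℝ≥0∞ := fun m => ∫⁻ t in Set.Ico ((2:ℝ)^m) ((2:ℝ)^(m+1)), Gfun a tt₀ t with hc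
  have hdisj : ∀ n : ℕ, Pairwise (Function.onFun Disjoint fun m : ℕ =>
      Set.Ico ((2:ℝ)^(n+m)) ((2:ℝ)^(n+m+1))) := by
    intro n m m' hne
    simp only [Function.onFun]
    rw [Set.Ico_disjoint_Ico]
    rcases hne.lt_or_gt with h | h
    · calc min ((2:ℝ)^(n+m+1)) ((2:ℝ)^(n+m'+1)) ≤ (2:ℝ)^(n+m+1) := min_le_left _ _
        _ ≤ (2:ℝ)^(n+m') := pow_le_pow_right₀ one_le_two (by omega)
        _ ≤ max ((2:ℝ)^(n+m)) ((2:ℝ)^(n+m')) := le_max_right _ _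
    · calc min ((2:ℝ)^(n+m+1)) ((2:ℝ)^(n+m'+1)) ≤ (2:ℝ)^(n+m'+1) := min_le_right _ _
        _ ≤ (2:ℝ)^(n+m) := pow_le_pow_right₀ one_le_two (by omega)
        _ ≤ max ((2:ℝ)^(n+m)) ((2:ℝ)^(n+m')) := le_max_left _ _
  have hunion : ∀ n : ℕ, Set.Ici ((2:ℝ)^n) = ⋃ m : ℕ, Set.Ico ((2:ℝ)^(n+m)) ((2:ℝ)^(n+m+1)) := by
    intro n
    ext t
    simp only [Set.mem_Ici, Set.mem_iUnion, Set.mem_Ico]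
    constructor
    · intro ht
      have h1 : (1:ℝ) ≤ t := le_trans (one_le_pow₀ one_le_two) ht
      have ht0 : (0:ℝ) ≤ t := by linarith
      set k : ℕ := ⌊t⌋.toNat with hk
      have hfl : ((k:ℝ)) ≤ t := (mem_Ico_floor ht0).1
      have hfl2 : t < (k:ℝ) + 1 := (mem_Ico_floor ht0).2
      have hk2n : 2^n ≤ k := by
        have : ((2^n : ℕ) : ℤ) ≤ ⌊t⌋ := Int.le_floor.mpr (by push_cast; exact ht)
        have h2 := Int.toNat_le_toNat this
        rwa [Int.toNat_natCast] at h2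
      have hk1 : k ≠ 0 := by
        have : (1:ℕ) ≤ 2^n := Nat.one_le_two_pow
        omega
      set m' : ℕ := Nat.log 2 k with hm'
      have hnm : n ≤ m' := (Nat.le_log_iff_pow_le one_lt_two hk1).mpr hk2n
      have hlow : 2^m' ≤ k := Nat.pow_log_le_self 2 hk1
      have hhigh : k < 2^(m'+1) := Nat.lt_pow_succ_log_self one_lt_two k
      refine ⟨m' - n, ?_, ?_⟩
      · rw [Nat.add_sub_cancel' hnm]
        calc ((2:ℝ)^m') = ((2^m' : ℕ) : ℝ) := by push_cast; ring
          _ ≤ (k : ℝ) := by exact_mod_cast hlow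
          _ ≤ t := hfl
      · rw [Nat.add_sub_cancel' hnm]
        calc t < (k:ℝ) + 1 := hfl2
          _ ≤ ((2^(m'+1) : ℕ) : ℝ) := by exact_mod_cast hhigh
          _ = (2:ℝ)^(m'+1) := by push_cast; ring
    · rintro ⟨m, hm1, _⟩
      calc (2:ℝ)^n ≤ (2:ℝ)^(n+m) := pow_le_pow_right₀ one_le_two (by omega)
        _ ≤ t := hm1
  have hBsum : ∀ n : ℕ, Bfun a n tt₀ = ∑' m : ℕ, c (n + m) := by
    intro n
    unfold Bfun
    rw [hunion n, Measure.restrict_iUnion (hdisj n) (fun m => measurableSet_Ico),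
      lintegral_sum_measure]
  have hc_ne : ∑' m : ℕ, c m ≠ ∞ := by
    have h0 : ∑' m : ℕ, c m = Bfun a 0 tt₀ := by
      rw [hBsum 0]
      exact tsum_congr fun m => by rw [Nat.zero_add]
    rw [h0]
    intro hcon
    apply hfin
    rw [Ffun_split a 0 tt₀, hcon, add_top]
  have := ENNReal.tendsto_sum_nat_add c hc_ne
  have heq : (fun n : ℕ => Bfun a n tt₀) = fun n : ℕ => ∑' m : ℕ, c (m + n) := by
    funext n
    rw [hBsum n]
    exact tsum_congr fun m => by rw [Nat.add_comm]
  rw [heq]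
  exact this

end main

section main2
variable (a : ℕ → ℂ)

lemma key_ineq (n : ℕ) {tt₀ : ℝ} (htt₀ : 0 ≤ tt₀) (hn : 2 * tt₀ ≤ (2:ℝ)^n)
    {tt : ℝ} (htt : 0 ≤ tt) :
    (⨅ s ∈ Set.Ici (0:ℝ), Ffun a s) ≤ Afun a n tt + 16 * Bfun a n tt₀ := by
  set v := tt - 2^n * ⌊tt / 2^n⌋ with hv
  have hv0 : 0 ≤ v := fract_nonneg' tt n
  have hv1 : v < 2^n := fract_lt' tt n
  have hI : (⨅ s ∈ Set.Ici (0:ℝ), Ffun a s) ≤ Ffun a v := iInf₂_le v hv0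
  rw [Ffun_split a n v] at hI
  have hA : Afun a n v ≤ Afun a n tt := by
    apply lintegral_mono_ae
    filter_upwards [ae_restrict_mem measurableSet_Ico] with t ht
    unfold Gfun
    apply mul_le_mul_left
    apply ENNReal.ofReal_le_ofReal
    apply pow_le_pow_left₀ (dSum_nonneg _ _) _ 2
    exact dSum_fract_le n ht.1 ht.2 htt
  have hB : Bfun a n v ≤ 16 * Bfun a n tt₀ := by
    have hstep : Bfun a n v ≤ ∫⁻ t in Set.Ici ((2:ℝ)^n), 16 * Gfun a tt₀ t := by
      apply lintegral_mono_ae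
      filter_upwards [ae_restrict_mem measurableSet_Ici] with t ht
      simp only [Set.mem_Ici] at ht
      have ht0 : (0:ℝ) ≤ t := le_trans (by positivity) ht
      have h1 : dSum t v ≤ 2 * t := by
        have := dSum_le_add ht0 hv0
        linarith
      have h2 : t / 2 ≤ dSum t tt₀ := by
        have := sub_le_dSum ht0 htt₀
        linarith
      have h3 : (dSum t v)^2 ≤ 16 * (dSum t tt₀)^2 := by
        nlinarith [dSum_nonneg t v, dSum_nonneg t tt₀, h1, h2, ht0]
      unfold Gfun
      calc ENNReal.ofReal ((dSum t v)^2) * (‖hsum a t‖₊ : ℝ≥0∞)^2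
          ≤ ENNReal.ofReal (16 * (dSum t tt₀)^2) * (‖hsum a t‖₊ : ℝ≥0∞)^2 :=
            mul_le_mul_left (ENNReal.ofReal_le_ofReal h3) _
        _ = 16 * (ENNReal.ofReal ((dSum t tt₀)^2) * (‖hsum a t‖₊ : ℝ≥0∞)^2) := by
            rw [ENNReal.ofReal_mul (by norm_num : (0:ℝ) ≤ 16), ENNReal.ofReal_ofNat,
              mul_assoc]
    rw [lintegral_const_mul' 16 _ (by norm_num)] at hstep
    exact hstep
  calc (⨅ s ∈ Set.Ici (0:ℝ), Ffun a s) ≤ Afun a n v + Bfun a n v := hI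
    _ ≤ Afun a n tt + 16 * Bfun a n tt₀ := add_le_add hA hB

/-- for square-summable `(a_k)`, `ĥ = ∑_{k≥0} a_k χ_{[k,k+1)}` and its partial
sums `ĥₙ = ∑_{k<2ⁿ} a_k χ_{[k,k+1)}`, if `V₀(ĥ) = inf_{t̃∈ℝ₊} ∫ (t ⊕ t̃)² |ĥ|² < ∞`, then
`(V₀(ĥₙ))ₙ` is nondecreasing and converges to `V₀(ĥ)`. -/
theorem stmt14 (a : ℕ → ℂ) (ha : Summable fun k => ‖a k‖ ^ 2)
    (hfin : (⨅ tt ∈ Set.Ici (0:ℝ), ∫⁻ t, ENNReal.ofReal ((dSum t tt) ^ 2) *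
        (‖∑' k : ℕ, a k * Set.indicator (Set.Ico (k : ℝ) ((k : ℝ) + 1)) (fun _ => (1:ℂ)) t‖₊ : ℝ≥0∞) ^ 2
        ∂μplus) ≠ ∞) :
    Monotone (fun n : ℕ => ⨅ tt ∈ Set.Ici (0:ℝ), ∫⁻ t, ENNReal.ofReal ((dSum t tt) ^ 2) *
        (‖∑ k ∈ Finset.range (2 ^ n),
            a k * Set.indicator (Set.Ico (k : ℝ) ((k : ℝ) + 1)) (fun _ => (1:ℂ)) t‖₊ : ℝ≥0∞) ^ 2
        ∂μplus) ∧
    Tendsto (fun n : ℕ => ⨅ tt ∈ Set.Ici (0:ℝ), ∫⁻ t, ENNReal.ofReal ((dSum t tt) ^ 2) *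
        (‖∑ k ∈ Finset.range (2 ^ n),
            a k * Set.indicator (Set.Ico (k : ℝ) ((k : ℝ) + 1)) (fun _ => (1:ℂ)) t‖₊ : ℝ≥0∞) ^ 2
        ∂μplus)
      atTop
      (nhds (⨅ tt ∈ Set.Ici (0:ℝ), ∫⁻ t, ENNReal.ofReal ((dSum t tt) ^ 2) *
        (‖∑' k : ℕ, a k * Set.indicator (Set.Ico (k : ℝ) ((k : ℝ) + 1)) (fun _ => (1:ℂ)) t‖₊ : ℝ≥0∞) ^ 2
        ∂μplus)) := by
  have hIeq : (⨅ tt ∈ Set.Ici (0:ℝ), ∫⁻ t, ENNReal.ofReal ((dSum t tt) ^ 2) *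
        (‖∑' k : ℕ, a k * Set.indicator (Set.Ico (k : ℝ) ((k : ℝ) + 1)) (fun _ => (1:ℂ)) t‖₊ : ℝ≥0∞) ^ 2
        ∂μplus) = ⨅ tt ∈ Set.Ici (0:ℝ), Ffun a tt :=
    iInf_congr fun tt => iInf_congr fun _ => lint_full a tt
  have hInEq : ∀ n : ℕ, (⨅ tt ∈ Set.Ici (0:ℝ), ∫⁻ t, ENNReal.ofReal ((dSum t tt) ^ 2) *
        (‖∑ k ∈ Finset.range (2 ^ n),
            a k * Set.indicator (Set.Ico (k : ℝ) ((k : ℝ) + 1)) (fun _ => (1:ℂ)) t‖₊ : ℝ≥0∞) ^ 2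
        ∂μplus) = ⨅ tt ∈ Set.Ici (0:ℝ), Afun a n tt :=
    fun n => iInf_congr fun tt => iInf_congr fun _ => lint_partial a tt n
  rw [hIeq] at hfin
  simp only [hInEq, hIeq]
  set In : ℕ → ℝ≥0∞ := fun n => ⨅ tt ∈ Set.Ici (0:ℝ), Afun a n tt with hIn
  set I : ℝ≥0∞ := ⨅ tt ∈ Set.Ici (0:ℝ), Ffun a tt with hIdef
  have hmono : Monotone In := by
    intro n m hnm
    exact iInf₂_mono fun tt htt =>
      lintegral_mono' (Measure.restrict_mono
        (Set.Ico_subset_Ico_right (pow_le_pow_right₀ one_le_two hnm)) le_rfl) le_rfl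
  refine ⟨hmono, ?_⟩
  obtain ⟨tt₀, htt₀, hFfin⟩ : ∃ tt₀, 0 ≤ tt₀ ∧ Ffun a tt₀ ≠ ∞ := by
    by_contra hcon
    push_neg at hcon
    exact hfin (iInf_eq_top.mpr fun tt => iInf_eq_top.mpr fun htt => hcon tt htt)
  have hT := Bfun_tendsto a hFfin
  have htop : Tendsto In atTop (nhds (⨆ n, In n)) := tendsto_atTop_iSup hmono
  suffices hS : (⨆ n, In n) = I by rw [← hS]; exact htop
  apply le_antisymm
  · apply iSup_le
    intro n
    apply le_iInf₂
    intro tt htt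
    calc In n ≤ Afun a n tt := iInf₂_le tt htt
      _ ≤ Ffun a tt :=
        lintegral_mono' (Measure.restrict_mono Set.Ico_subset_Ici_self le_rfl) le_rfl
  · obtain ⟨N, hN⟩ := pow_unbounded_of_one_lt (2*tt₀) (one_lt_two (α := ℝ))
    have hev : ∀ᶠ n in atTop, I ≤ (⨆ m, In m) + 16 * Bfun a n tt₀ := by
      filter_upwards [eventually_ge_atTop N] with n hn
      have h2n : 2 * tt₀ ≤ (2:ℝ)^n := le_trans hN.le (pow_le_pow_right₀ one_le_two hn)
      have h1 : I ≤ ⨅ tt : Set.Ici (0:ℝ), (Afun a n ↑tt + 16 * Bfun a n tt₀) :=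
        le_iInf fun tt => key_ineq a n htt₀ h2n tt.2
      have h2 : (⨅ tt : Set.Ici (0:ℝ), (Afun a n ↑tt + 16 * Bfun a n tt₀))
          = (⨅ tt : Set.Ici (0:ℝ), Afun a n ↑tt) + 16 * Bfun a n tt₀ :=
        ENNReal.iInf_add.symm
      have h3 : (⨅ tt : Set.Ici (0:ℝ), Afun a n ↑tt) = In n :=
        iInf_subtype'' _ _
      calc I ≤ _ := h1
        _ = In n + 16 * Bfun a n tt₀ := by rw [h2, h3]
        _ ≤ (⨆ m, In m) + 16 * Bfun a n tt₀ :=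
          add_le_add_left (le_iSup In n) _
    have hlim : Tendsto (fun n => (⨆ m, In m) + 16 * Bfun a n tt₀) atTop
        (nhds ((⨆ m, In m) + 16 * 0)) :=
      Filter.Tendsto.const_add _ (ENNReal.Tendsto.const_mul hT (Or.inr (by norm_num)))
    have := ge_of_tendsto hlim hev
    simpa using this
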